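/- Let $E$ be a connected topological graph whose geometric realization $R(E)$ is locally path-connected and semi-locally simply connected, and let $\pi : \tilde R \to R(E)$ be the universal covering. Set $\tilde E^0 = \pi^{-1}(E^0)$ and $\tilde E^1 = \pi^{-1}(E^1 \times \{1/2\})$. Then, defining $s(\tilde e)$ (resp. $r(\tilde e)$) as the endpoint of the lift starting at $\tilde e$ of the path $t \mapsto (e, \tfrac{1}{2}(1-t))$ (resp. $t \mapsto (e, \tfrac{1}{2}(1+t))$) in $R(E)$, where $\pi(\tilde e) = (e, 1/2)$, one obtains well-defined continuous maps $s, r : \tilde E^1 \to \tilde E^0$, and $(\tilde E^0, \tilde E^1, s, r)$ is a topological graph covering $E$. -/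

import Mathlib

/-- The gluing relation defining the geometric realization `R(E)` of a topological graph:
`(e,0)` is identified with `s e` and `(e,1)` with `r e`. -/
inductive glueRel {E0 E1 : Type*} (s r : E1 → E0) :
    (E1 × unitInterval) ⊕ E0 → (E1 × unitInterval) ⊕ E0 → Prop
  | src (e : E1) : glueRel s r (Sum.inl (e, 0)) (Sum.inr (s e))
  | rng (e : E1) : glueRel s r (Sum.inl (e, 1)) (Sum.inr (r e))

open Topology Set

section Glue

variable {E0 E1 : Type*}

lemma unitInterval.one_ne_zero' : (1 : unitInterval) ≠ 0 := by
  intro h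
  have := congrArg Subtype.val h
  norm_num at this

open Classical in
noncomputable def glueNorm (s r : E1 → E0) :
    (E1 × unitInterval) ⊕ E0 → (E1 × unitInterval) ⊕ E0
  | .inl et => if et.2 = 0 then .inr (s et.1) else if et.2 = 1 then .inr (r et.1) else .inl et
  | .inr v => .inr v

lemma glueNorm_rel {s r : E1 → E0} {a b} (h : glueRel s r a b) :
    glueNorm s r a = glueNorm s r b := by
  cases h with
  | src e => simp [glueNorm]
  | rng e => simp [glueNorm, unitInterval.one_ne_zero']

lemma mk_glueNorm (s r : E1 → E0) (a) :
    Quot.mk (glueRel s r) (glueNorm s r a) = Quot.mk _ a := by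
  cases a with
  | inr v => rfl
  | inl et =>
    obtain ⟨e, t⟩ := et
    by_cases h0 : t = 0
    · subst h0
      simp only [glueNorm, if_pos rfl]
      exact (Quot.sound (glueRel.src e)).symm
    · by_cases h1 : t = 1
      · subst h1
        simp only [glueNorm, if_neg unitInterval.one_ne_zero', if_pos rfl]
        exact (Quot.sound (glueRel.rng e)).symm
      · simp only [glueNorm, if_neg h0, if_neg h1]

lemma mk_eq_iff {s r : E1 → E0} {a b} :
    Quot.mk (glueRel s r) a = Quot.mk _ b ↔ glueNorm s r a = glueNorm s r b := by
  constructor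
  · intro h
    exact congrArg (Quot.lift (glueNorm s r) (fun _ _ h' => glueNorm_rel h')) h
  · intro h
    rw [← mk_glueNorm s r a, h, mk_glueNorm]

lemma preimage_mk_image {s r : E1 → E0} {V : Set ((E1 × unitInterval) ⊕ E0)}
    (hsat : ∀ a, a ∈ V ↔ glueNorm s r a ∈ V) :
    Quot.mk (glueRel s r) ⁻¹' (Quot.mk (glueRel s r) '' V) = V := by
  ext x
  constructor
  · rintro ⟨a, haV, hax⟩
    have h := mk_eq_iff.mp hax
    exact (hsat x).mpr (h ▸ (hsat a).mp haV)
  · exact fun hx => ⟨x, hx, rfl⟩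

variable [TopologicalSpace E0] [TopologicalSpace E1]

lemma isOpen_mk_image {s r : E1 → E0} {V : Set ((E1 × unitInterval) ⊕ E0)}
    (hV : IsOpen V) (hsat : ∀ a, a ∈ V ↔ glueNorm s r a ∈ V) :
    IsOpen (Quot.mk (glueRel s r) '' V) := by
  rw [← isQuotientMap_quot_mk.isOpen_preimage, preimage_mk_image hsat]
  exact hV

lemma vMk_isEmbedding (s r : E1 → E0) (hs : Continuous s) (hr : Continuous r) :
    IsEmbedding (fun v : E0 => Quot.mk (glueRel s r) (Sum.inr v)) := by
  have hcont : Continuous (fun v : E0 => Quot.mk (glueRel s r) (Sum.inr v)) :=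
    continuous_quot_mk.comp continuous_inr
  refine ⟨⟨le_antisymm (continuous_iff_le_induced.mp hcont) ?_⟩, ?_⟩
  · intro U hU
    rw [isOpen_induced_iff]
    set V : Set ((E1 × unitInterval) ⊕ E0) :=
      Sum.inl '' ((s ⁻¹' U) ×ˢ {t : unitInterval | t ≠ 1} ∪ (r ⁻¹' U) ×ˢ {t : unitInterval | t ≠ 0})
        ∪ Sum.inr '' U with hVdef
    have hmemV : ∀ e (t : unitInterval),
        Sum.inl (e, t) ∈ V ↔ ((s e ∈ U ∧ t ≠ 1) ∨ (r e ∈ U ∧ t ≠ 0)) := by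
      intro e t
      simp [hVdef, Set.mem_prod]
    have hmemVr : ∀ v, Sum.inr v ∈ V ↔ v ∈ U := by
      intro v; simp [hVdef]
    have hsat : ∀ a, a ∈ V ↔ glueNorm s r a ∈ V := by
      rintro (⟨e, t⟩ | v)
      · have h01 : (0 : unitInterval) ≠ 1 := fun h => unitInterval.one_ne_zero' h.symm
        by_cases h0 : t = 0
        · subst h0
          have hg : glueNorm s r (Sum.inl (e, 0)) = Sum.inr (s e) := by simp [glueNorm]
          rw [hmemV, hg, hmemVr]
          constructor
          · rintro (⟨h, _⟩ | ⟨_, h⟩)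
            · exact h
            · exact absurd rfl h
          · exact fun h => Or.inl ⟨h, h01⟩
        · by_cases h1 : t = 1
          · subst h1
            have hg : glueNorm s r (Sum.inl (e, 1)) = Sum.inr (r e) := by
              simp [glueNorm, unitInterval.one_ne_zero']
            rw [hmemV, hg, hmemVr]
            constructor
            · rintro (⟨_, h⟩ | ⟨h, _⟩)
              · exact absurd rfl h
              · exact h
            · exact fun h => Or.inr ⟨h, unitInterval.one_ne_zero'⟩
          · simp only [glueNorm, if_neg h0, if_neg h1]
      · simp [glueNorm]
    have hVopen : IsOpen V := by
      apply IsOpen.union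
      · apply isOpenMap_inl
        apply IsOpen.union
        · exact (hs.isOpen_preimage U hU).prod (isOpen_compl_singleton (x := (1 : unitInterval)))
        · exact (hr.isOpen_preimage U hU).prod (isOpen_compl_singleton (x := (0 : unitInterval)))
      · exact isOpenMap_inr U hU
    refine ⟨Quot.mk _ '' V, isOpen_mk_image hVopen hsat, ?_⟩
    ext v
    show Quot.mk (glueRel s r) (Sum.inr v) ∈ Quot.mk (glueRel s r) '' V ↔ v ∈ U
    rw [← Set.mem_preimage, preimage_mk_image hsat, hmemVr]
  · intro v v' h
    have h' := mk_eq_iff.mp h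
    simpa [glueNorm] using h'

lemma eMk_isEmbedding (s r : E1 → E0) :
    IsEmbedding (fun e : E1 =>
      Quot.mk (glueRel s r) (Sum.inl (e, ⟨1/2, by norm_num⟩))) := by
  have hhalf0 : (⟨1/2, by norm_num⟩ : unitInterval) ≠ 0 := by
    intro h; have := congrArg Subtype.val h; norm_num at this
  have hhalf1 : (⟨1/2, by norm_num⟩ : unitInterval) ≠ 1 := by
    intro h; have := congrArg Subtype.val h; norm_num at this
  have hcont : Continuous (fun e : E1 =>
      Quot.mk (glueRel s r) (Sum.inl (e, ⟨1/2, by norm_num⟩))) :=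
    continuous_quot_mk.comp (continuous_inl.comp (Continuous.prodMk continuous_id continuous_const))
  refine ⟨⟨le_antisymm (continuous_iff_le_induced.mp hcont) ?_⟩, ?_⟩
  · intro U hU
    rw [isOpen_induced_iff]
    set V : Set ((E1 × unitInterval) ⊕ E0) :=
      Sum.inl '' (U ×ˢ {t : unitInterval | t ≠ 0 ∧ t ≠ 1}) with hVdef
    have hmemV : ∀ e (t : unitInterval),
        Sum.inl (e, t) ∈ V ↔ (e ∈ U ∧ t ≠ 0 ∧ t ≠ 1) := by
      intro e t; simp [hVdef, Set.mem_prod]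
    have hsat : ∀ a, a ∈ V ↔ glueNorm s r a ∈ V := by
      rintro (⟨e, t⟩ | v)
      · by_cases h0 : t = 0
        · subst h0
          simp only [glueNorm, if_pos rfl]
          rw [hmemV]
          simp [hVdef]
        · by_cases h1 : t = 1
          · subst h1
            simp only [glueNorm, if_neg unitInterval.one_ne_zero', if_pos rfl]
            rw [hmemV]
            simp [hVdef]
          · simp only [glueNorm, if_neg h0, if_neg h1]
      · simp [glueNorm, hVdef]
    have hVopen : IsOpen V := by
      apply isOpenMap_inl
      refine hU.prod ?_
      have : {t : unitInterval | t ≠ 0 ∧ t ≠ 1} = {(0:unitInterval)}ᶜ ∩ {(1:unitInterval)}ᶜ := by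
        ext t; simp [and_comm]
      rw [this]
      exact (isOpen_compl_singleton).inter (isOpen_compl_singleton)
    refine ⟨Quot.mk _ '' V, isOpen_mk_image hVopen hsat, ?_⟩
    ext e
    show Quot.mk (glueRel s r) (Sum.inl (e, _)) ∈ Quot.mk (glueRel s r) '' V ↔ e ∈ U
    rw [← Set.mem_preimage, preimage_mk_image hsat, hmemV]
    exact ⟨fun h => h.1, fun h => ⟨h, hhalf0, hhalf1⟩⟩
  · intro e e' h
    have h' := mk_eq_iff.mp h
    simp only [glueNorm, if_neg hhalf0, if_neg hhalf1] at h'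
    exact (Prod.ext_iff.mp (Sum.inl.injEq _ _ ▸ h')).1

end Glue



open Classical in
theorem cover_pullback {X B R' : Type*} [TopologicalSpace X] [TopologicalSpace B]
    [TopologicalSpace R'] {π : R' → X} (hπ : IsCoveringMap π) {g : B → X}
    (hg : IsEmbedding g) (q : {p : R' // ∃ b, π p = g b} → B)
    (hq : ∀ p, g (q p) = π p.1) : IsCoveringMap q := by
  have hqcont : Continuous q := by
    rw [hg.continuous_iff]
    have : g ∘ q = π ∘ Subtype.val := funext hq
    rw [this]
    exact hπ.continuous.comp continuous_subtype_val
  intro b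
  by_cases hne : Nonempty ↥(π ⁻¹' {g b})
  swap
  · have hemp : IsEmpty ↥(π ⁻¹' {g b}) := not_nonempty_iff.mp hne
    obtain ⟨-, U, hU, hUo, -, H, -⟩ := hπ (g b)
    have : IsEmpty ↥(q ⁻¹' {b}) := ⟨fun p => hemp.false ⟨p.1.1, by
      show π p.1.1 = g b
      rw [← hq, show q p.1 = b from p.2]⟩⟩
    refine IsEvenlyCovered.of_preimage_eq_empty _
      (hg.continuous.continuousAt.preimage_mem_nhds (hUo.mem_nhds hU)) ?_
    ext p
    simp only [mem_preimage, mem_empty_iff_false, iff_false]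
    intro hp
    exact hemp.false (H ⟨p.1, by rw [mem_preimage, ← hq]; exact hp⟩).2
  haveI := hne
  have hd : DiscreteTopology ↥(π ⁻¹' {g b}) := (hπ (g b)).1
  obtain ⟨T, hT⟩ : ∃ T : Bundle.Trivialization (↥(π ⁻¹' {g b})) π, g b ∈ T.baseSet :=
    ⟨_, (hπ (g b)).mem_toTrivialization_baseSet⟩
  suffices hex : ∃ T' : Bundle.Trivialization (↥(π ⁻¹' {g b})) q, b ∈ T'.baseSet by
    obtain ⟨T', hT'⟩ := hex
    exact (IsEvenlyCovered.of_trivialization hT').to_isEvenlyCovered_preimage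
  have hsrcmem : ∀ p : {p : R' // ∃ b, π p = g b}, q p ∈ g ⁻¹' T.baseSet →
      p.1 ∈ T.source := by
    intro p hp
    rw [T.mem_source, ← hq p]
    exact hp
  -- the trivialization of q over g ⁻¹' T.baseSet
  refine ⟨⟨⟨⟨⟨fun p => (q p, (T p.1).2),
      fun x => if h : ∃ b', π (T.toOpenPartialHomeomorph.symm (g x.1, x.2)) = g b' then
          ⟨T.toOpenPartialHomeomorph.symm (g x.1, x.2), h⟩
        else ⟨x.2.1, ⟨b, x.2.2⟩⟩,
      q ⁻¹' (g ⁻¹' T.baseSet), (g ⁻¹' T.baseSet) ×ˢ univ,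
      ?_, ?_, ?_, ?_⟩, ?_, ?_⟩, ?_, ?_⟩,
      g ⁻¹' T.baseSet, hg.continuous.isOpen_preimage _ T.open_baseSet, rfl, rfl, ?_⟩, hT⟩
  · -- map_source
    intro p hp
    exact ⟨hp, mem_univ _⟩
  · -- map_target
    rintro ⟨b', i⟩ ⟨hb', -⟩
    have hmem : (g b', (i : ↥(π ⁻¹' {g b}))) ∈ T.target := by
      rw [T.target_eq]
      exact ⟨hb', mem_univ _⟩
    have hproj := T.proj_symm_apply hmem
    show q _ ∈ g ⁻¹' T.baseSet
    dsimp only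
    split_ifs with h
    · show g (q ⟨T.toOpenPartialHomeomorph.symm (g b', i), h⟩) ∈ T.baseSet
      rw [hq, hproj]
      exact hb'
    · exact absurd ⟨b', hproj⟩ h
  · -- left_inv
    intro p hp
    have hsrc := hsrcmem p hp
    have hfst : (T p.1).1 = π p.1 := T.coe_fst hsrc
    have key : T.toOpenPartialHomeomorph.symm (g (q p), (T p.1).2) = p.1 := by
      rw [hq p, ← hfst]
      exact T.toOpenPartialHomeomorph.left_inv hsrc
    dsimp only
    split_ifs with h
    · exact Subtype.ext key
    · refine absurd ?_ h
      obtain ⟨b'', hb''⟩ := p.2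
      exact ⟨b'', by rw [key, hb'']⟩
  · -- right_inv
    rintro ⟨b', i⟩ ⟨hb', -⟩
    have hmem : (g b', (i : ↥(π ⁻¹' {g b}))) ∈ T.target := by
      rw [T.target_eq]; exact ⟨hb', mem_univ _⟩
    have hproj := T.proj_symm_apply hmem
    dsimp only
    split_ifs with h
    · have h1 : q ⟨T.toOpenPartialHomeomorph.symm (g b', i), h⟩ = b' :=
        hg.injective (by rw [hq]; exact hproj)
      have h2 : T (T.toOpenPartialHomeomorph.symm (g b', i)) = (g b', i) :=
        T.apply_symm_apply hmem
      refine Prod.ext h1 ?_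
      show (T (T.toOpenPartialHomeomorph.symm (g b', i))).2 = i
      rw [h2]
    · exact absurd ⟨b', hproj⟩ h
  · -- continuousOn toFun
    refine ContinuousOn.prodMk hqcont.continuousOn ?_
    have : ContinuousOn (fun p : {p : R' // ∃ b, π p = g b} => T p.1)
        (q ⁻¹' (g ⁻¹' T.baseSet)) := by
      refine T.continuousOn_toFun.comp continuous_subtype_val.continuousOn ?_
      intro p hp
      exact hsrcmem p hp
    exact this.snd
  · -- continuousOn invFun
    rw [(IsEmbedding.subtypeVal (p := fun p => ∃ b, π p = g b)).toIsInducing.continuousOn_iff]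
    have hc : Continuous (fun x : B × ↥(π ⁻¹' {g b}) => ((g x.1, x.2) : X × ↥(π ⁻¹' {g b}))) :=
      (hg.continuous.comp continuous_fst).prodMk continuous_snd
    have hF0 : ContinuousOn
        (T.toOpenPartialHomeomorph.symm ∘ (fun x : B × ↥(π ⁻¹' {g b}) => ((g x.1, x.2) : X × ↥(π ⁻¹' {g b}))))
        ((g ⁻¹' T.baseSet) ×ˢ univ) := by
      refine T.toOpenPartialHomeomorph.continuousOn_symm.comp hc.continuousOn ?_
      rintro ⟨b', i⟩ ⟨hb', -⟩
      rw [T.target_eq]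
      exact ⟨hb', mem_univ _⟩
    refine hF0.congr ?_
    rintro ⟨b', i⟩ ⟨hb', -⟩
    have hmem : (g b', (i : ↥(π ⁻¹' {g b}))) ∈ T.target := by
      rw [T.target_eq]; exact ⟨hb', mem_univ _⟩
    have hproj := T.proj_symm_apply hmem
    show Subtype.val (dite _ _ _) = _
    split_ifs with h
    · rfl
    · exact absurd ⟨b', hproj⟩ h
  · -- open_source
    exact (hg.continuous.isOpen_preimage _ T.open_baseSet).preimage hqcont
  · -- open_target
    exact (hg.continuous.isOpen_preimage _ T.open_baseSet).prod isOpen_univ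
  · -- proj_toFun
    intro p _
    rfl



theorem cover_hlp {X A R' : Type*} [TopologicalSpace X] [TopologicalSpace A]
    [TopologicalSpace R'] {π : R' → X} (hπ : IsCoveringMap π)
    {H : A × unitInterval → X} (hH : Continuous H)
    {h₀ : A → R'} (hh₀ : Continuous h₀) (hinit : ∀ a, π (h₀ a) = H (a, 0)) :
    ∃ L : A × unitInterval → R', Continuous L ∧ (∀ x, π (L x) = H x) ∧
      (∀ a, L (a, 0) = h₀ a) := by
  classical
  have local_lift : ∀ a : A, ∃ N : Set A, IsOpen N ∧ a ∈ N ∧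
      ∃ L : A × unitInterval → R', ContinuousOn L (N ×ˢ univ) ∧
        (∀ x ∈ N ×ˢ (univ : Set unitInterval), π (L x) = H x) ∧
        (∀ y ∈ N, L (y, 0) = h₀ y) := by
    intro a
    have hTall : ∀ t : unitInterval, ∃ Tr : Bundle.Trivialization (↥(π ⁻¹' {H (a, t)})) π,
        H (a, t) ∈ Tr.baseSet := fun t => by
      obtain ⟨Γ, hΓ, hΓ0⟩ := hπ.exists_path_lifts ⟨fun u => H (a, u),
        hH.comp (continuous_const.prodMk continuous_id)⟩ (h₀ a) (hinit a).symm
      haveI : Nonempty ↥(π ⁻¹' {H (a, t)}) := ⟨⟨Γ t, congrFun hΓ t⟩⟩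
      exact ⟨(hπ (H (a, t))).toTrivialization, (hπ (H (a, t))).mem_toTrivialization_baseSet⟩
    choose T hT using hTall
    have hnb : ∀ t : unitInterval, ∃ (N : Set A) (J : Set unitInterval),
        IsOpen N ∧ IsOpen J ∧ a ∈ N ∧ t ∈ J ∧ N ×ˢ J ⊆ H ⁻¹' (T t).baseSet := by
      intro t
      have hop : IsOpen (H ⁻¹' (T t).baseSet) := hH.isOpen_preimage _ (T t).open_baseSet
      obtain ⟨N, J, hN, hJ, haN, htJ, hsub⟩ := isOpen_prod_iff.mp hop a t (hT t)
      exact ⟨N, J, hN, hJ, haN, htJ, hsub⟩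
    choose Nf Jf hNo hJo haN htJ hsub using hnb
    obtain ⟨δ, hδ, hleb⟩ := lebesgue_number_lemma_of_metric (isCompact_univ (X := unitInterval))
      hJo (fun t _ => mem_iUnion.mpr ⟨t, htJ t⟩)
    choose ix hix using fun u : unitInterval => hleb u (mem_univ u)
    obtain ⟨n, hn⟩ := exists_nat_one_div_lt hδ
    set m : ℕ := n + 1 with hm
    have hmpos : (0:ℝ) < m := by positivity
    have hptmem : ∀ k : ℕ, k ≤ m → (k : ℝ) / m ∈ Set.Icc (0:ℝ) 1 := by
      intro k hk
      constructor
      · positivity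
      · rw [div_le_one hmpos]; exact_mod_cast hk
    set pt : ℕ → unitInterval := fun k => Set.projIcc 0 1 zero_le_one ((k:ℝ)/m) with hpt
    have hptval : ∀ k : ℕ, k ≤ m → ((pt k : unitInterval) : ℝ) = (k:ℝ)/m := by
      intro k hk
      rw [hpt]
      simp only
      rw [Set.projIcc_of_mem zero_le_one (hptmem k hk)]
    set N : Set A := ⋂ k ∈ Finset.range (m+1), Nf (ix (pt k)) with hN
    have hNopen : IsOpen N := isOpen_biInter_finset (fun k _ => hNo _)
    have haN' : a ∈ N := mem_iInter₂.mpr (fun k _ => haN _)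
    have hNsub : ∀ k : ℕ, k ≤ m → N ⊆ Nf (ix (pt k)) := fun k hk =>
      iInter₂_subset k (Finset.mem_range.mpr (Nat.lt_succ_of_le hk))
    have hseg : ∀ k : ℕ, k < m → ∀ u : unitInterval, (k:ℝ)/m ≤ (u:ℝ) →
        (u:ℝ) ≤ ((k:ℝ)+1)/m → ∀ y ∈ N, H (y, u) ∈ (T (ix (pt k))).baseSet := by
      intro k hkm u hul huu y hy
      have hkle : k ≤ m := le_of_lt hkm
      have hNk : y ∈ Nf (ix (pt k)) := hNsub k hkle hy
      have hJk : u ∈ Jf (ix (pt k)) := by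
        apply hix (pt k)
        rw [Metric.mem_ball, Subtype.dist_eq, hptval k hkle, Real.dist_eq]
        have h1 : (0:ℝ) ≤ (u:ℝ) - (k:ℝ)/m := by linarith
        rw [abs_of_nonneg h1]
        have h2 : (u:ℝ) - (k:ℝ)/m ≤ 1/m := by
          have : ((k:ℝ)+1)/m - (k:ℝ)/m = 1/m := by ring
          linarith
        have hmeq : (1:ℝ)/m = 1/((n:ℝ)+1) := by rw [hm]; push_cast; ring
        linarith
      exact hsub (ix (pt k)) ⟨hNk, hJk⟩
    have main : ∀ k : ℕ, k ≤ m → ∃ L : A × unitInterval → R',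
        ContinuousOn L (N ×ˢ {t : unitInterval | (t:ℝ) ≤ (k:ℝ)/m}) ∧
        (∀ x ∈ N ×ˢ {t : unitInterval | (t:ℝ) ≤ (k:ℝ)/m}, π (L x) = H x) ∧
        (∀ y ∈ N, L (y, 0) = h₀ y) := by
      intro k
      induction k with
      | zero =>
        intro _
        refine ⟨fun x => h₀ x.1, (hh₀.comp continuous_fst).continuousOn, ?_, fun y _ => rfl⟩
        rintro ⟨y, t⟩ ⟨-, ht⟩
        simp only [mem_setOf_eq, Nat.cast_zero, zero_div] at ht
        have ht0 : t = 0 := Subtype.ext (le_antisymm ht t.2.1)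
        rw [ht0]
        exact hinit y
      | succ k ih =>
        intro hk
        obtain ⟨L, hLc, hLπ, hL0⟩ := ih (le_trans (Nat.le_succ k) hk)
        have hkm : (k:ℝ)/m ≤ 1 := by
          rw [div_le_one hmpos]
          exact_mod_cast le_trans (Nat.le_succ k) hk
        have hk1m : ((k:ℝ)+1)/m ≤ 1 := by
          rw [div_le_one hmpos]
          exact_mod_cast hk
        have hkm0 : (0:ℝ) ≤ (k:ℝ)/m := by positivity
        have hkstep : (k:ℝ)/m ≤ ((k:ℝ)+1)/m := (div_le_div_iff_of_pos_right hmpos).mpr (by linarith)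
        have hkmlt : k < m := hk
        set uk : unitInterval := ⟨(k:ℝ)/m, hkm0, hkm⟩ with huk
        set Tk := T (ix (pt k)) with hTkdef
        have hsegk := hseg k hkmlt
        have hukseg : ∀ y ∈ N, H (y, uk) ∈ Tk.baseSet :=
          fun y hy => hsegk uk le_rfl hkstep y hy
        have hLukmem : ∀ y ∈ N,
            (y, uk) ∈ N ×ˢ {t : unitInterval | (t:ℝ) ≤ (k:ℝ)/m} :=
          fun y hy => ⟨hy, le_refl ((k:ℝ)/m)⟩
        have hLuk_src : ∀ y ∈ N, L (y, uk) ∈ Tk.source := by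
          intro y hy
          rw [Bundle.Trivialization.mem_source, hLπ _ (hLukmem y hy)]
          exact hukseg y hy
        have hmnmem : ∀ t : unitInterval, min (t:ℝ) ((k:ℝ)/m) ∈ Set.Icc (0:ℝ) 1 :=
          fun t => ⟨le_min t.2.1 hkm0, le_trans (min_le_left _ _) t.2.2⟩
        have hmxmem : ∀ t : unitInterval, max (t:ℝ) ((k:ℝ)/m) ∈ Set.Icc (0:ℝ) 1 :=
          fun t => ⟨le_trans t.2.1 (le_max_left _ _), max_le t.2.2 hkm⟩
        set mn : unitInterval → unitInterval := fun t => ⟨min (t:ℝ) ((k:ℝ)/m), hmnmem t⟩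
          with hmndef
        set mx : unitInterval → unitInterval := fun t => ⟨max (t:ℝ) ((k:ℝ)/m), hmxmem t⟩
          with hmxdef
        have hmncont : Continuous mn :=
          Continuous.subtype_mk (continuous_subtype_val.min continuous_const) _
        have hmxcont : Continuous mx :=
          Continuous.subtype_mk (continuous_subtype_val.max continuous_const) _
        set S : Set (A × unitInterval) :=
          N ×ˢ {t : unitInterval | (t:ℝ) ≤ ((k:ℕ)+1:ℕ)/m} with hSdef
        have hSsnd : ∀ x ∈ S, ((x : A × unitInterval).2 : ℝ) ≤ ((k:ℝ)+1)/m := by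
          rintro ⟨y, t⟩ ⟨-, ht⟩
          simp only [mem_setOf_eq] at ht
          show (t:ℝ) ≤ ((k:ℝ)+1)/m
          exact_mod_cast ht
        set L' : A × unitInterval → R' := fun x =>
          if (x.2:ℝ) ≤ (k:ℝ)/m then L (x.1, mn x.2)
          else Tk.toOpenPartialHomeomorph.symm (H (x.1, mx x.2), (Tk (L (x.1, uk))).2) with hL'def
        have hmxbase : ∀ x ∈ S, H ((x : A × unitInterval).1, mx (x : A × unitInterval).2)
            ∈ Tk.baseSet := by
          rintro ⟨y, t⟩ hx
          refine hsegk (mx t) (le_max_right _ _) ?_ y hx.1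
          exact max_le (hSsnd _ hx) hkstep
        refine ⟨L', ?_, ?_, ?_⟩
        · -- continuity
          rw [continuousOn_iff_continuous_restrict]
          have hrfl : S.domRestrict L' = fun z : ↥S =>
              if ((z : A × unitInterval).2 : ℝ) ≤ (k:ℝ)/m then
                L ((z : A × unitInterval).1, mn (z : A × unitInterval).2)
              else Tk.toOpenPartialHomeomorph.symm
                (H ((z : A × unitInterval).1, mx (z : A × unitInterval).2),
                  (Tk (L ((z : A × unitInterval).1, uk))).2) := rfl
          rw [hrfl]
          have hf' : Continuous (fun z : ↥S =>
              L ((z : A × unitInterval).1, mn (z : A × unitInterval).2)) := by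
            refine hLc.comp_continuous
              ((continuous_fst.comp continuous_subtype_val).prodMk
                (hmncont.comp (continuous_snd.comp continuous_subtype_val))) ?_
            intro z
            refine ⟨z.2.1, ?_⟩
            simp only [Set.mem_setOf_eq]
            exact min_le_right _ _
          have hw : Continuous (fun z : ↥S => L ((z : A × unitInterval).1, uk)) :=
            hLc.comp_continuous
              ((continuous_fst.comp continuous_subtype_val).prodMk continuous_const)
              (fun z => ⟨z.2.1, by simp only [Set.mem_setOf_eq]; exact le_refl ((k:ℝ)/m)⟩)
          have hTkw : Continuous (fun z : ↥S => Tk (L ((z : A × unitInterval).1, uk))) :=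
            Tk.continuousOn_toFun.comp_continuous hw (fun z => hLuk_src _ z.2.1)
          have hHmx : Continuous (fun z : ↥S =>
              H ((z : A × unitInterval).1, mx (z : A × unitInterval).2)) :=
            hH.comp ((continuous_fst.comp continuous_subtype_val).prodMk
              (hmxcont.comp (continuous_snd.comp continuous_subtype_val)))
          have hg' : Continuous (fun z : ↥S => Tk.toOpenPartialHomeomorph.symm
              (H ((z : A × unitInterval).1, mx (z : A × unitInterval).2),
                (Tk (L ((z : A × unitInterval).1, uk))).2)) := by
            refine Tk.toOpenPartialHomeomorph.continuousOn_symm.comp_continuous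
              (hHmx.prodMk hTkw.snd) ?_
            intro z
            rw [Bundle.Trivialization.mem_target]
            exact hmxbase z z.2
          refine Continuous.if_le hf' hg'
            (continuous_subtype_val.comp (continuous_snd.comp continuous_subtype_val))
            continuous_const ?_
          rintro ⟨⟨y, t⟩, hxS⟩ heq
          have hy : y ∈ N := hxS.1
          have hmnt : mn t = uk := Subtype.ext (by
            show min (t:ℝ) ((k:ℝ)/m) = (k:ℝ)/m
            rw [heq, min_self])
          have hmxt : mx t = uk := Subtype.ext (by
            show max (t:ℝ) ((k:ℝ)/m) = (k:ℝ)/m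
            rw [heq, max_self])
          show L (y, mn t) = Tk.toOpenPartialHomeomorph.symm (H (y, mx t), (Tk (L (y, uk))).2)
          rw [hmnt, hmxt]
          have hsrc := hLuk_src y hy
          have hpair : (H (y, uk), (Tk (L (y, uk))).2) = Tk (L (y, uk)) := by
            refine Prod.ext ?_ rfl
            rw [Tk.coe_fst hsrc, hLπ _ (hLukmem y hy)]
          rw [hpair]
          exact (Tk.toOpenPartialHomeomorph.left_inv hsrc).symm
        · -- lifts H
          rintro ⟨y, t⟩ hx
          have hy : y ∈ N := hx.1
          show π (L' (y, t)) = H (y, t)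
          rw [hL'def]
          dsimp only
          split_ifs with hcase
          · have hmnt : mn t = t := Subtype.ext (min_eq_left hcase)
            rw [hmnt]
            exact hLπ (y, t) ⟨hy, hcase⟩
          · push_neg at hcase
            have hmxt : mx t = t := Subtype.ext (max_eq_left (le_of_lt hcase))
            have hmem : (H (y, mx t), (Tk (L (y, uk))).2) ∈ Tk.target := by
              rw [Bundle.Trivialization.mem_target]
              exact hmxbase (y, t) hx
            rw [Tk.proj_symm_apply hmem, hmxt]
        · -- initial condition
          intro y hy
          show L' (y, 0) = h₀ y
          rw [hL'def]
          dsimp only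
          rw [if_pos (by
            show ((0 : unitInterval) : ℝ) ≤ (k:ℝ)/m
            simpa using hkm0)]
          have hmn0 : mn 0 = 0 := Subtype.ext (by
            show min ((0 : unitInterval) : ℝ) ((k:ℝ)/m) = ((0 : unitInterval) : ℝ)
            simp [hkm0])
          rw [hmn0]
          exact hL0 y hy
    obtain ⟨L, hLc, hLπ, hL0⟩ := main m le_rfl
    have huniv : {t : unitInterval | (t:ℝ) ≤ (m:ℝ)/m} = univ := by
      ext t
      simp only [mem_setOf_eq, mem_univ, iff_true]
      rw [div_self (ne_of_gt hmpos)]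
      exact t.2.2
    rw [huniv] at hLc hLπ
    exact ⟨N, hNopen, haN', L, hLc, hLπ, hL0⟩
  -- glue the local lifts
  choose Nl hNlo hal Ll hLlc hLlπ hLl0 using local_lift
  refine ⟨fun x => Ll x.1 x, ?_, fun x => hLlπ x.1 x ⟨hal x.1, mem_univ _⟩,
    fun a => hLl0 a a (hal a)⟩
  rw [continuous_iff_continuousAt]
  rintro ⟨a₀, t₀⟩
  have hEq : ∀ y ∈ Nl a₀, ∀ t, Ll y (y, t) = Ll a₀ (y, t) := by
    intro y hy
    have c1 : Continuous (fun t : unitInterval => Ll y (y, t)) :=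
      (hLlc y).comp_continuous (continuous_const.prodMk continuous_id)
        (fun t => ⟨hal y, mem_univ _⟩)
    have c2 : Continuous (fun t : unitInterval => Ll a₀ (y, t)) :=
      (hLlc a₀).comp_continuous (continuous_const.prodMk continuous_id)
        (fun t => ⟨hy, mem_univ _⟩)
    have hcomp : π ∘ (fun t : unitInterval => Ll y (y, t)) =
        π ∘ (fun t : unitInterval => Ll a₀ (y, t)) := by
      funext t
      show π (Ll y (y, t)) = π (Ll a₀ (y, t))
      rw [hLlπ y (y, t) ⟨hal y, mem_univ _⟩, hLlπ a₀ (y, t) ⟨hy, mem_univ _⟩]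
    have h00 : Ll y (y, 0) = Ll a₀ (y, 0) := by
      rw [hLl0 y y (hal y), hLl0 a₀ y hy]
    have heqfun := hπ.eq_of_comp_eq c1 c2 hcomp 0 h00
    exact fun t => congrFun heqfun t
  have hopen : IsOpen ((Nl a₀) ×ˢ (univ : Set unitInterval)) := (hNlo a₀).prod isOpen_univ
  have hmem : (a₀, t₀) ∈ Nl a₀ ×ˢ (univ : Set unitInterval) := ⟨hal a₀, mem_univ _⟩
  have hCA : ContinuousAt (Ll a₀) (a₀, t₀) := (hLlc a₀).continuousAt (hopen.mem_nhds hmem)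
  refine hCA.congr ?_
  refine Filter.eventuallyEq_of_mem (hopen.mem_nhds hmem) ?_
  rintro ⟨y, t⟩ ⟨hy, -⟩
  exact (hEq y hy t).symm

/-- Let `E` be a connected topological graph whose geometric realization
`R = R(E)` is locally path-connected and semi-locally simply connected, and let
`π : R̃ → R` be the universal covering.  With `Ẽ⁰ = π⁻¹(E⁰)` and `Ẽ¹ = π⁻¹(E¹ × {1/2})`,
defining `s̃ et` (resp. `r̃ et`) as the endpoint of the lift starting at `et` of the path
`t ↦ (e, (1-t)/2)` (resp. `t ↦ (e, (1+t)/2)`), where `π et = (e, 1/2)`, yields well-defined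
continuous maps `s̃, r̃ : Ẽ¹ → Ẽ⁰` making `(Ẽ⁰, Ẽ¹, s̃, r̃)` a topological graph covering
`E`. -/
theorem stmt10 {E0 E1 Rt : Type*} [TopologicalSpace E0] [TopologicalSpace E1]
    [T2Space E0] [T2Space E1] [LocallyCompactSpace E0] [LocallyCompactSpace E1]
    [TopologicalSpace Rt]
    (s r : E1 → E0) (hscont : Continuous s) (hrcont : Continuous r)
    -- `E` is connected: its geometric realization is path connected
    (hconn : PathConnectedSpace (Quot (glueRel s r)))
    -- `R(E)` is locally path-connected ...
    (hlpc : LocPathConnectedSpace (Quot (glueRel s r)))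
    -- ... and semi-locally simply connected
    (hslsc : ∀ x : Quot (glueRel s r), ∃ U ∈ nhds x, ∀ γ : Path x x,
        (∀ t, γ t ∈ U) → Path.Homotopic γ (Path.refl x))
    -- `π : R̃ → R(E)` is the universal covering
    (π : Rt → Quot (glueRel s r)) (hπ : IsCoveringMap π)
    (hRt1 : PathConnectedSpace Rt) (hRt2 : SimplyConnectedSpace Rt) :
    ∃ (p0 : {p : Rt // ∃ v : E0, π p = Quot.mk (glueRel s r) (Sum.inr v)} → E0)
      (p1 : {p : Rt // ∃ e : E1,
        π p = Quot.mk (glueRel s r) (Sum.inl (e, ⟨1/2, by norm_num⟩))} → E1)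
      (st rt : {p : Rt // ∃ e : E1,
          π p = Quot.mk (glueRel s r) (Sum.inl (e, ⟨1/2, by norm_num⟩))} →
        {p : Rt // ∃ v : E0, π p = Quot.mk (glueRel s r) (Sum.inr v)}),
      -- `p0` and `p1` are the restrictions of `π` along the canonical embeddings
      (∀ vt, π vt.1 = Quot.mk (glueRel s r) (Sum.inr (p0 vt))) ∧
      (∀ et, π et.1 = Quot.mk (glueRel s r) (Sum.inl (p1 et, ⟨1/2, by norm_num⟩))) ∧
      -- `s̃ et` is the endpoint of the lift starting at `et` of the path down to `(e,0) ∼ s e`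
      (∀ et, ∃ γ : C(unitInterval, Rt),
        (∀ u : unitInterval, π (γ u) = Quot.mk (glueRel s r)
          (Sum.inl (p1 et, ⟨(u : ℝ)/2, by
            have h1 := u.2.1; have h2 := u.2.2
            constructor <;> nlinarith⟩))) ∧
        γ 1 = et.1 ∧ γ 0 = (st et).1) ∧
      -- `r̃ et` is the endpoint of the lift starting at `et` of the path up to `(e,1) ∼ r e`
      (∀ et, ∃ γ : C(unitInterval, Rt),
        (∀ u : unitInterval, π (γ u) = Quot.mk (glueRel s r)
          (Sum.inl (p1 et, ⟨(1 + (u : ℝ))/2, by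
            have h1 := u.2.1; have h2 := u.2.2
            constructor <;> nlinarith⟩))) ∧
        γ 0 = et.1 ∧ γ 1 = (rt et).1) ∧
      -- these are continuous maps
      Continuous st ∧ Continuous rt ∧
      -- and `(p0, p1)` is a graph covering of `E`
      IsCoveringMap p0 ∧ IsCoveringMap p1 ∧
      (∀ et, p0 (st et) = s (p1 et)) ∧ (∀ et, p0 (rt et) = r (p1 et)) := by
  
  classical
  have hgEemb := eMk_isEmbedding (E0 := E0) s r
  have hgVemb := vMk_isEmbedding s r hscont hrcont
  set p1 : {p : Rt // ∃ e : E1,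
      π p = Quot.mk (glueRel s r) (Sum.inl (e, ⟨1/2, by norm_num⟩))} → E1 :=
    fun et => et.2.choose with hp1def
  have hp1 : ∀ et, π et.1 =
      Quot.mk (glueRel s r) (Sum.inl (p1 et, ⟨1/2, by norm_num⟩)) :=
    fun et => et.2.choose_spec
  set p0 : {p : Rt // ∃ v : E0, π p = Quot.mk (glueRel s r) (Sum.inr v)} → E0 :=
    fun vt => vt.2.choose with hp0def
  have hp0 : ∀ vt, π vt.1 = Quot.mk (glueRel s r) (Sum.inr (p0 vt)) :=
    fun vt => vt.2.choose_spec
  have hp0uniq : ∀ vt v, π vt.1 = Quot.mk (glueRel s r) (Sum.inr v) → p0 vt = v :=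
    fun vt v h => hgVemb.injective ((hp0 vt).symm.trans h)
  have hp1cont : Continuous p1 := by
    rw [hgEemb.continuous_iff]
    have hcomp : (fun e : E1 => Quot.mk (glueRel s r) (Sum.inl (e, ⟨1/2, by norm_num⟩))) ∘ p1
        = π ∘ Subtype.val := by
      funext et
      exact (hp1 et).symm
    rw [hcomp]
    exact hπ.continuous.comp continuous_subtype_val
  -- the downward path lifting (towards the source)
  have hHsmem : ∀ (u : unitInterval), (1 - (u:ℝ))/2 ∈ Set.Icc (0:ℝ) 1 := by
    intro u
    have h1 := u.2.1; have h2 := u.2.2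
    constructor <;> [linarith; linarith]
  have hHscont : Continuous (fun x : {p : Rt // ∃ e : E1,
      π p = Quot.mk (glueRel s r) (Sum.inl (e, ⟨1/2, by norm_num⟩))} × unitInterval =>
      Quot.mk (glueRel s r) (Sum.inl (p1 x.1,
        (⟨(1 - ((x.2 : unitInterval)):ℝ)/2, hHsmem x.2⟩ : unitInterval)))) := by
    refine continuous_quot_mk.comp (continuous_inl.comp ?_)
    refine (hp1cont.comp continuous_fst).prodMk ?_
    refine Continuous.subtype_mk ?_ _
    exact (continuous_const.sub (continuous_subtype_val.comp continuous_snd)).div_const 2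
  have hHsinit : ∀ et, π (Subtype.val et) = Quot.mk (glueRel s r) (Sum.inl (p1 et,
      (⟨(1 - (((0:unitInterval))):ℝ)/2, hHsmem 0⟩ : unitInterval))) := by
    intro et
    rw [hp1 et]
    refine congrArg _ (congrArg _ (Prod.ext rfl (Subtype.ext ?_)))
    show (1/2 : ℝ) = (1 - ((0:unitInterval):ℝ))/2
    norm_num
  obtain ⟨Ls, hLsc, hLsπ, hLs0⟩ := cover_hlp hπ hHscont continuous_subtype_val hHsinit
  -- the upward path lifting (towards the range)
  have hHrmem : ∀ (u : unitInterval), (1 + (u:ℝ))/2 ∈ Set.Icc (0:ℝ) 1 := by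
    intro u
    have h1 := u.2.1; have h2 := u.2.2
    constructor <;> [linarith; linarith]
  have hHrcont : Continuous (fun x : {p : Rt // ∃ e : E1,
      π p = Quot.mk (glueRel s r) (Sum.inl (e, ⟨1/2, by norm_num⟩))} × unitInterval =>
      Quot.mk (glueRel s r) (Sum.inl (p1 x.1,
        (⟨(1 + ((x.2 : unitInterval)):ℝ)/2, hHrmem x.2⟩ : unitInterval)))) := by
    refine continuous_quot_mk.comp (continuous_inl.comp ?_)
    refine (hp1cont.comp continuous_fst).prodMk ?_
    refine Continuous.subtype_mk ?_ _
    exact (continuous_const.add (continuous_subtype_val.comp continuous_snd)).div_const 2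
  have hHrinit : ∀ et, π (Subtype.val et) = Quot.mk (glueRel s r) (Sum.inl (p1 et,
      (⟨(1 + (((0:unitInterval))):ℝ)/2, hHrmem 0⟩ : unitInterval))) := by
    intro et
    rw [hp1 et]
    refine congrArg _ (congrArg _ (Prod.ext rfl (Subtype.ext ?_)))
    show (1/2 : ℝ) = (1 + ((0:unitInterval):ℝ))/2
    norm_num
  obtain ⟨Lr, hLrc, hLrπ, hLr0⟩ := cover_hlp hπ hHrcont continuous_subtype_val hHrinit
  -- key endpoint identities
  have hskey : ∀ et, π (Ls (et, 1)) = Quot.mk (glueRel s r) (Sum.inr (s (p1 et))) := by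
    intro et
    rw [hLsπ (et, 1)]
    have h1 : (⟨(1 - ((1:unitInterval):ℝ))/2, hHsmem 1⟩ : unitInterval) = 0 :=
      Subtype.ext (by norm_num)
    rw [h1]
    exact Quot.sound (glueRel.src (p1 et))
  have hrkey : ∀ et, π (Lr (et, 1)) = Quot.mk (glueRel s r) (Sum.inr (r (p1 et))) := by
    intro et
    rw [hLrπ (et, 1)]
    have h1 : (⟨(1 + ((1:unitInterval):ℝ))/2, hHrmem 1⟩ : unitInterval) = 1 :=
      Subtype.ext (by norm_num)
    rw [h1]
    exact Quot.sound (glueRel.rng (p1 et))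
  refine ⟨p0, p1, fun et => ⟨Ls (et, 1), ⟨s (p1 et), hskey et⟩⟩,
    fun et => ⟨Lr (et, 1), ⟨r (p1 et), hrkey et⟩⟩,
    hp0, hp1, ?_, ?_, ?_, ?_, ?_, ?_, ?_, ?_⟩
  · -- the lift realizing s̃
    intro et
    refine ⟨⟨fun u => Ls (et, unitInterval.symm u),
      hLsc.comp (continuous_const.prodMk unitInterval.continuous_symm)⟩, ?_, ?_, ?_⟩
    · intro u
      show π (Ls (et, unitInterval.symm u)) = _
      rw [hLsπ (et, unitInterval.symm u)]
      refine congrArg _ (congrArg _ (Prod.ext rfl (Subtype.ext ?_)))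
      show (1 - ((unitInterval.symm u : unitInterval) : ℝ))/2 = (u : ℝ)/2
      rw [unitInterval.coe_symm_eq]
      ring
    · show Ls (et, unitInterval.symm 1) = et.1
      rw [unitInterval.symm_one]
      exact hLs0 et
    · show Ls (et, unitInterval.symm 0) = Ls (et, 1)
      rw [unitInterval.symm_zero]
  · -- the lift realizing r̃
    intro et
    refine ⟨⟨fun u => Lr (et, u),
      hLrc.comp (continuous_const.prodMk continuous_id)⟩, ?_, ?_, ?_⟩
    · intro u
      show π (Lr (et, u)) = _
      exact hLrπ (et, u)
    · exact hLr0 et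
    · rfl
  · -- continuity of s̃
    exact Continuous.subtype_mk (hLsc.comp (continuous_id.prodMk continuous_const)) _
  · -- continuity of r̃
    exact Continuous.subtype_mk (hLrc.comp (continuous_id.prodMk continuous_const)) _
  · -- p0 is a covering map
    exact cover_pullback hπ hgVemb p0 (fun p => (hp0 p).symm)
  · -- p1 is a covering map
    exact cover_pullback hπ hgEemb p1 (fun p => (hp1 p).symm)
  · -- s̃ covers s
    intro et
    exact hp0uniq _ _ (hskey et)
  · -- r̃ covers r
    intro et
    exact hp0uniq _ _ (hrkey et)
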